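/- Let s ≥ 1 and k ≥ 1 be integers, let d ≥ 3 be an integer, and let G be an n-vertex d-regular graph containing 4s − 2 distinct edges that are pairwise at distance at least 2k + 2 from one another. Then (d + 2√(d−1)) · λ_{s+1}(G) ≤ (d − 2√(d−1)) · λ_{n−s+1}(G) + 4(d−1)^{3/2}/(k+1). -/

import Mathlib

open Matrix SimpleGraph
attribute [local instance] Classical.propDecidable
set_option maxHeartbeats 2000000

noncomputable def sortedEigs {n : ℕ} (A : Matrix (Fin n) (Fin n) ℝ) : Fin n → ℝ :=
  if h : A.IsHermitian then h.eigenvalues ∘ Tuple.sort h.eigenvalues else 0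

/-- `lapEig G i` is the `i`-th smallest Laplacian eigenvalue of `G` (1-based indexing),
so `lapEig G 2 = λ₂(G)` and `lapEig G n = λₙ(G)`; junk value `0` if `i` is out of range. -/
noncomputable def lapEig {n : ℕ} (G : SimpleGraph (Fin n)) (i : ℕ) : ℝ :=
  if h : i - 1 < n then sortedEigs (G.lapMatrix ℝ) ⟨i - 1, h⟩ else 0

/-- `adjEig G i` is the `i`-th largest adjacency eigenvalue of `G` (1-based indexing),
so `adjEig G 1 = μ₁(G)` and `adjEig G n = μₙ(G)`; junk value `0` if `i` is out of range. -/
noncomputable def adjEig {n : ℕ} (G : SimpleGraph (Fin n)) (i : ℕ) : ℝ :=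
  if h : n - i < n then sortedEigs (G.adjMatrix ℝ) ⟨n - i, h⟩ else 0

section Rayleigh
variable {n : ℕ} {A : Matrix (Fin n) (Fin n) ℝ}

lemma quad_eq (hA : A.IsHermitian) (z : Fin n → ℝ) :
    z ⬝ᵥ (A *ᵥ z) = ∑ i, hA.eigenvalues i *
      ((star (hA.eigenvectorUnitary : Matrix (Fin n) (Fin n) ℝ) *ᵥ z) i)^2 := by
  set U : Matrix (Fin n) (Fin n) ℝ := (hA.eigenvectorUnitary : Matrix (Fin n) (Fin n) ℝ) with hU
  have hsU : star U = Uᵀ := by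
    rw [Matrix.star_eq_conjTranspose, Matrix.conjTranspose_eq_transpose_of_trivial]
  set w : Fin n → ℝ := star U *ᵥ z with hw
  have hz : vecMul z U = w := by
    rw [hw, hsU, ← Matrix.vecMul_transpose, Matrix.transpose_transpose]
  conv_lhs => rw [hA.spectral_theorem, Unitary.conjStarAlgAut_apply]
  rw [← Matrix.mulVec_mulVec, ← Matrix.mulVec_mulVec, Matrix.dotProduct_mulVec, hz, ← hw]
  rw [dotProduct, Finset.sum_congr rfl]
  intro i _
  rw [Matrix.mulVec_diagonal]
  simp only [Function.comp_apply, RCLike.ofReal_real_eq_id, id_eq]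
  ring

lemma norm_eq (hA : A.IsHermitian) (z : Fin n → ℝ) :
    z ⬝ᵥ z = ∑ i, ((star (hA.eigenvectorUnitary : Matrix (Fin n) (Fin n) ℝ) *ᵥ z) i)^2 := by
  set U : Matrix (Fin n) (Fin n) ℝ := (hA.eigenvectorUnitary : Matrix (Fin n) (Fin n) ℝ) with hU
  have hsU : star U = Uᵀ := by
    rw [Matrix.star_eq_conjTranspose, Matrix.conjTranspose_eq_transpose_of_trivial]
  have h1 : U * star U = 1 := mem_unitaryGroup_iff.mp hA.eigenvectorUnitary.2
  have h2 : z ⬝ᵥ z = z ⬝ᵥ ((U * star U) *ᵥ z) := by rw [h1, Matrix.one_mulVec]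
  rw [h2, ← Matrix.mulVec_mulVec, Matrix.dotProduct_mulVec, hsU, ← Matrix.vecMul_transpose,
    Matrix.transpose_transpose, dotProduct, Finset.sum_congr rfl]
  intro i _
  rw [sq]

lemma sortedEigs_eq (hA : A.IsHermitian) :
    sortedEigs A = hA.eigenvalues ∘ Tuple.sort hA.eigenvalues := by
  rw [sortedEigs, dif_pos hA]

lemma rayleigh_low (hA : A.IsHermitian) (p : Fin n) (z : Fin n → ℝ)
    (hz : ∀ j : Fin n, (j : ℕ) < (p : ℕ) →
      (star (hA.eigenvectorUnitary : Matrix (Fin n) (Fin n) ℝ) *ᵥ z)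
        (Tuple.sort hA.eigenvalues j) = 0) :
    sortedEigs A p * (z ⬝ᵥ z) ≤ z ⬝ᵥ (A *ᵥ z) := by
  set w := star (hA.eigenvectorUnitary : Matrix (Fin n) (Fin n) ℝ) *ᵥ z with hw
  set σ := Tuple.sort hA.eigenvalues with hσ
  rw [quad_eq hA z, norm_eq hA z, ← hw]
  rw [← Equiv.sum_comp σ (fun i => hA.eigenvalues i * (w i)^2),
    ← Equiv.sum_comp σ (fun i => (w i)^2), Finset.mul_sum, ← sub_nonneg,
    ← Finset.sum_sub_distrib]
  apply Finset.sum_nonneg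
  intro j _
  rcases lt_or_ge (j : ℕ) (p : ℕ) with h | h
  · simp [hz j h]
  · have : sortedEigs A p ≤ hA.eigenvalues (σ j) := by
      have := Tuple.monotone_sort hA.eigenvalues (a := p) (b := j) (by exact h)
      rw [sortedEigs_eq hA]
      exact this
    nlinarith [sq_nonneg (w (σ j))]

lemma rayleigh_high (hA : A.IsHermitian) (p : Fin n) (z : Fin n → ℝ)
    (hz : ∀ j : Fin n, (p : ℕ) < (j : ℕ) →
      (star (hA.eigenvectorUnitary : Matrix (Fin n) (Fin n) ℝ) *ᵥ z)
        (Tuple.sort hA.eigenvalues j) = 0) :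
    z ⬝ᵥ (A *ᵥ z) ≤ sortedEigs A p * (z ⬝ᵥ z) := by
  set w := star (hA.eigenvectorUnitary : Matrix (Fin n) (Fin n) ℝ) *ᵥ z with hw
  set σ := Tuple.sort hA.eigenvalues with hσ
  rw [quad_eq hA z, norm_eq hA z, ← hw]
  rw [← Equiv.sum_comp σ (fun i => hA.eigenvalues i * (w i)^2),
    ← Equiv.sum_comp σ (fun i => (w i)^2), Finset.mul_sum, ← sub_nonneg,
    ← Finset.sum_sub_distrib]
  apply Finset.sum_nonneg
  intro j _
  rcases lt_or_ge (p : ℕ) (j : ℕ) with h | h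
  · simp [hz j h]
  · have : hA.eigenvalues (σ j) ≤ sortedEigs A p := by
      have := Tuple.monotone_sort hA.eigenvalues (a := j) (b := p) (by exact h)
      rw [sortedEigs_eq hA]
      exact this
    nlinarith [sq_nonneg (w (σ j))]

end Rayleigh


section Graph
variable {n : ℕ} (G : SimpleGraph (Fin n)) (p q : Fin n)

/-- distance to the edge {p,q} -/
noncomputable def rho (v : Fin n) : ℕ∞ := min (G.edist v p) (G.edist v q)

lemma rho_p : rho G p q p = 0 := by
  simp [rho, SimpleGraph.edist_self]

lemma rho_q : rho G p q q = 0 := by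
  simp [rho, SimpleGraph.edist_self]

lemma rho_adj {u v : Fin n} (h : G.Adj u v) :
    rho G p q u ≤ rho G p q v + 1 := by
  have he : G.edist u v ≤ 1 := le_of_eq (SimpleGraph.edist_eq_one_iff_adj.mpr h)
  have h1 : G.edist u p ≤ G.edist v p + 1 := by
    calc G.edist u p ≤ G.edist u v + G.edist v p := SimpleGraph.edist_triangle
    _ ≤ 1 + G.edist v p := by exact add_le_add_left he _
    _ = G.edist v p + 1 := by rw [add_comm]
  have h2 : G.edist u q ≤ G.edist v q + 1 := by
    calc G.edist u q ≤ G.edist u v + G.edist v q := SimpleGraph.edist_triangle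
    _ ≤ 1 + G.edist v q := by exact add_le_add_left he _
    _ = G.edist v q + 1 := by rw [add_comm]
  rw [rho, rho, ← min_add_add_right]
  exact le_min ((min_le_left _ _).trans h1) ((min_le_right _ _).trans h2)

lemma rho_eq_zero {u : Fin n} (h : rho G p q u = 0) : u = p ∨ u = q := by
  rw [rho, min_eq_iff] at h
  rcases h with ⟨h, -⟩ | ⟨h, -⟩
  · exact Or.inl (SimpleGraph.edist_eq_zero_iff.mp h)
  · exact Or.inr (SimpleGraph.edist_eq_zero_iff.mp h)

lemma exists_adj_rho_le {u : Fin n} {j : ℕ} (h : rho G p q u = ((j + 1 : ℕ) : ℕ∞)) :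
    ∃ w, G.Adj u w ∧ rho G p q w ≤ (j : ℕ∞) := by
  rw [rho, min_eq_iff] at h
  have main : ∀ t : Fin n, G.edist u t = ((j + 1 : ℕ) : ℕ∞) →
      ∃ w, G.Adj u w ∧ G.edist w t ≤ (j : ℕ∞) := by
    intro t ht
    obtain ⟨W, hW⟩ := SimpleGraph.exists_walk_of_edist_eq_coe ht
    cases W with
    | nil => simp at hW
    | @cons _ w _ hadj W' =>
      refine ⟨w, hadj, ?_⟩
      have : W'.length = j := by
        simpa [SimpleGraph.Walk.length_cons] using hW
      calc G.edist w t ≤ (W'.length : ℕ∞) := SimpleGraph.edist_le W'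
      _ = (j : ℕ∞) := by rw [this]
  rcases h with ⟨h, -⟩ | ⟨h, -⟩
  · obtain ⟨w, hw, hle⟩ := main p h
    exact ⟨w, hw, le_trans (min_le_left _ _) hle⟩
  · obtain ⟨w, hw, hle⟩ := main q h
    exact ⟨w, hw, le_trans (min_le_right _ _) hle⟩

lemma exists_wit (hpq : G.Adj p q) {u : Fin n} (h : rho G p q u ≠ ⊤) :
    ∃ w, G.Adj u w ∧ rho G p q w ≤ rho G p q u := by
  obtain ⟨j, hj⟩ := WithTop.ne_top_iff_exists.mp h
  cases j with
  | zero =>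
    rcases rho_eq_zero G p q hj.symm with rfl | rfl
    · exact ⟨q, hpq, by rw [rho_q]; exact zero_le⟩
    · exact ⟨p, hpq.symm, by rw [rho_p]; exact zero_le⟩
  | succ j =>
    obtain ⟨w, hw, hle⟩ := exists_adj_rho_le G p q (u := u) (j := j) hj.symm
    refine ⟨w, hw, hle.trans ?_⟩
    rw [← hj]
    exact Nat.cast_le.mpr (Nat.le_succ j)

lemma witness_card {d : ℕ} (hreg : G.IsRegularOfDegree d) (hpq : G.Adj p q)
    {u : Fin n} (h : rho G p q u ≠ ⊤) (P : Fin n → Prop) [DecidablePred P]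
    (hP : ∀ w, rho G p q w ≤ rho G p q u → ¬ P w) :
    ((G.neighborFinset u).filter P).card ≤ d - 1 := by
  obtain ⟨w, hw, hle⟩ := exists_wit G p q hpq h
  have hwmem : w ∈ G.neighborFinset u := by
    rw [SimpleGraph.mem_neighborFinset]; exact hw
  have hsub : (G.neighborFinset u).filter P ⊆ (G.neighborFinset u).erase w := by
    intro v hv
    rw [Finset.mem_filter] at hv
    rw [Finset.mem_erase]
    refine ⟨?_, hv.1⟩
    rintro rfl
    exact hP v hle hv.2
  calc ((G.neighborFinset u).filter P).card ≤ ((G.neighborFinset u).erase w).card :=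
        Finset.card_le_card hsub
  _ = (G.neighborFinset u).card - 1 := Finset.card_erase_of_mem hwmem
  _ = d - 1 := by rw [SimpleGraph.card_neighborFinset_eq_degree, hreg u]

/-- the sphere of radius `j` around the edge -/
noncomputable def Vj (j : ℕ) : Finset (Fin n) :=
  Finset.univ.filter (fun v => rho G p q v = (j : ℕ∞))

lemma card_Vsucc {d : ℕ} (hreg : G.IsRegularOfDegree d) (hpq : G.Adj p q) (j : ℕ) :
    (Vj G p q (j + 1)).card ≤ (d - 1) * (Vj G p q j).card := by
  have hsub : Vj G p q (j + 1) ⊆ (Vj G p q j).biUnion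
      (fun u => (G.neighborFinset u).filter (fun v => rho G p q v = ((j+1 : ℕ) : ℕ∞))) := by
    intro v hv
    rw [Vj, Finset.mem_filter] at hv
    obtain ⟨w, hw, hle⟩ := exists_adj_rho_le G p q hv.2
    have hge : (j : ℕ∞) ≤ rho G p q w := by
      by_contra hcon
      push_neg at hcon
      have h2 := rho_adj G p q hw
      rw [hv.2] at h2
      have hlt : rho G p q w + 1 < (j : ℕ∞) + 1 :=
        (ENat.add_lt_add_iff_right (by simp)).2 hcon
      have hj1 : ((j + 1 : ℕ) : ℕ∞) = (j : ℕ∞) + 1 := by push_cast; ring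
      have hcontra := lt_of_le_of_lt h2 hlt
      rw [← hj1] at hcontra
      exact lt_irrefl _ hcontra
    have hweq : rho G p q w = (j : ℕ∞) := le_antisymm hle hge
    rw [Finset.mem_biUnion]
    exact ⟨w, by rw [Vj, Finset.mem_filter]; exact ⟨Finset.mem_univ _, hweq⟩,
      by rw [Finset.mem_filter, SimpleGraph.mem_neighborFinset]; exact ⟨hw.symm, hv.2⟩⟩
  calc (Vj G p q (j + 1)).card ≤ _ := Finset.card_le_card hsub
  _ ≤ ∑ u ∈ Vj G p q j, ((G.neighborFinset u).filter
        (fun v => rho G p q v = ((j+1 : ℕ) : ℕ∞))).card := Finset.card_biUnion_le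
  _ ≤ ∑ _u ∈ Vj G p q j, (d - 1) := by
      apply Finset.sum_le_sum
      intro u hu
      rw [Vj, Finset.mem_filter] at hu
      apply witness_card G p q hreg hpq (by rw [hu.2]; exact ENat.coe_ne_top j)
      intro w hw
      rw [hu.2] at hw
      intro hcon
      rw [hcon] at hw
      have : j + 1 ≤ j := by exact_mod_cast hw
      omega
  _ = (d - 1) * (Vj G p q j).card := by rw [Finset.sum_const, smul_eq_mul, mul_comm]

end Graph


section Alg

lemma alg_facts {d : ℕ} (hd : 3 ≤ d) :
    (0 < Real.sqrt ((d:ℝ)-1)) ∧ (Real.sqrt ((d:ℝ)-1))^2 = (d:ℝ)-1 ∧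
      (1 : ℝ) ≤ Real.sqrt ((d:ℝ)-1) := by
  have h2 : (2:ℝ) ≤ (d:ℝ) - 1 := by
    have : (3:ℝ) ≤ (d:ℝ) := by exact_mod_cast hd
    linarith
  refine ⟨Real.sqrt_pos.mpr (by linarith), Real.sq_sqrt (by linarith), ?_⟩
  have h := Real.sqrt_le_sqrt (show (1:ℝ) ≤ (d:ℝ)-1 by linarith)
  rwa [Real.sqrt_one] at h

lemma alg_cross {d : ℕ} (hd : 3 ≤ d) :
    ((d:ℝ) + 2*Real.sqrt ((d:ℝ)-1)) * (1 - (Real.sqrt ((d:ℝ)-1))⁻¹)^2 =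
    ((d:ℝ) - 2*Real.sqrt ((d:ℝ)-1)) * (1 + (Real.sqrt ((d:ℝ)-1))⁻¹)^2 := by
  obtain ⟨hpos, hsq, -⟩ := alg_facts hd
  have hne : Real.sqrt ((d:ℝ)-1) ≠ 0 := ne_of_gt hpos
  field_simp
  nlinarith [hsq]

end Alg

section Vec
variable {n : ℕ} (G : SimpleGraph (Fin n)) (d k : ℕ) (p q : Fin n)

noncomputable def xv (v : Fin n) : ℝ :=
  if rho G p q v ≤ (k : ℕ∞) then ((Real.sqrt ((d:ℝ)-1))⁻¹) ^ (rho G p q v).toNat else 0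

noncomputable def yv (v : Fin n) : ℝ :=
  if rho G p q v ≤ (k : ℕ∞) then (-(Real.sqrt ((d:ℝ)-1))⁻¹) ^ (rho G p q v).toNat else 0

lemma ysq (v : Fin n) : (yv G d k p q v)^2 = (xv G d k p q v)^2 := by
  rw [xv, yv]
  split
  · rw [neg_pow, mul_pow, ← pow_mul, mul_comm _ 2, pow_mul, neg_one_sq, one_pow, one_mul]
  · rfl

lemma xv_p : xv G d k p q p = 1 := by
  rw [xv, if_pos]
  · rw [rho_p]; rfl
  · rw [rho_p]; exact zero_le

lemma xv_nonneg (v : Fin n) : 0 ≤ xv G d k p q v := by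
  rw [xv]; split
  · positivity
  · exact le_refl 0

lemma negsq (a : ℝ) (m : ℕ) : ((-a)^m)^2 = (a^m)^2 := by
  rw [neg_pow, mul_pow, ← pow_mul, mul_comm _ 2, pow_mul, neg_one_sq, one_pow, one_mul]

lemma rho_coe_toNat {v : Fin n} (h : rho G p q v ≤ (k : ℕ∞)) :
    (((rho G p q v).toNat : ℕ) : ℕ∞) = rho G p q v :=
  ENat.coe_toNat (lt_of_le_of_lt h (ENat.coe_lt_top k)).ne

lemma norm_formula (hd : 3 ≤ d) :
    ∑ v, (xv G d k p q v)^2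
      = ∑ j ∈ Finset.range (k+1), ((Vj G p q j).card : ℝ) * (((d:ℝ)-1)⁻¹)^j := by
  obtain ⟨hpos, hsq, -⟩ := alg_facts hd
  set S : Finset (Fin n) := Finset.univ.filter (fun v => rho G p q v ≤ (k:ℕ∞)) with hS
  have h1 : ∑ v, (xv G d k p q v)^2 = ∑ v ∈ S, (xv G d k p q v)^2 := by
    symm
    apply Finset.sum_subset (Finset.subset_univ S)
    intro v _ hv
    have hnot : ¬ rho G p q v ≤ (k:ℕ∞) := by simpa [hS] using hv
    simp [xv, hnot]
  have h2 : ∀ v ∈ S, (rho G p q v).toNat ∈ Finset.range (k+1) := by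
    intro v hv
    have hv' : rho G p q v ≤ (k:ℕ∞) := by simpa [hS] using hv
    rw [Finset.mem_range]
    have := rho_coe_toNat G k p q hv'
    have : (((rho G p q v).toNat : ℕ) : ℕ∞) ≤ (k : ℕ∞) := by rw [this]; exact hv'
    exact Nat.lt_succ_of_le (Nat.cast_le.mp this)
  rw [h1, ← Finset.sum_fiberwise_of_maps_to h2]
  apply Finset.sum_congr rfl
  intro j hj
  have hjk : j ≤ k := by rw [Finset.mem_range] at hj; omega
  have hfe : S.filter (fun v => (rho G p q v).toNat = j) = Vj G p q j := by
    ext v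
    simp only [hS, Vj, Finset.mem_filter, Finset.mem_univ, true_and]
    constructor
    · rintro ⟨ha, hb⟩
      rw [← rho_coe_toNat G k p q ha, hb]
    · intro h
      have hle : rho G p q v ≤ (k:ℕ∞) := by rw [h]; exact Nat.cast_le.mpr hjk
      refine ⟨hle, ?_⟩
      rw [h]
      simp
  rw [hfe]
  have hval : ∀ v ∈ Vj G p q j, (xv G d k p q v)^2 = (((d:ℝ)-1)⁻¹)^j := by
    intro v hv
    rw [Vj, Finset.mem_filter] at hv
    have hle : rho G p q v ≤ (k:ℕ∞) := by rw [hv.2]; exact Nat.cast_le.mpr hjk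
    have htn : (rho G p q v).toNat = j := by rw [hv.2]; simp
    rw [xv, if_pos hle, htn, ← pow_mul, mul_comm j 2, pow_mul, inv_pow, hsq]
  rw [Finset.sum_congr rfl hval, Finset.sum_const, nsmul_eq_mul]

lemma nk_le (hd : 3 ≤ d) (hreg : G.IsRegularOfDegree d) (hpq : G.Adj p q) :
    ((k:ℝ)+1) * (((Vj G p q k).card : ℝ) * (((d:ℝ)-1)⁻¹)^k)
      ≤ ∑ v, (xv G d k p q v)^2 := by
  rw [norm_formula G d k p q hd]
  have hd1 : ((d:ℝ) - 1) = ((d - 1 : ℕ) : ℝ) := by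
    have : (1:ℕ) ≤ d := by omega
    push_cast [Nat.cast_sub this]
    ring
  have he2 : (2:ℝ) ≤ (d:ℝ) - 1 := by
    have : (3:ℝ) ≤ (d:ℝ) := by exact_mod_cast hd
    linarith
  have anti : ∀ j : ℕ, ((Vj G p q (j+1)).card : ℝ) * (((d:ℝ)-1)⁻¹)^(j+1)
      ≤ ((Vj G p q j).card : ℝ) * (((d:ℝ)-1)⁻¹)^j := by
    intro j
    have hc := card_Vsucc G p q hreg hpq j
    have hcr : ((Vj G p q (j+1)).card : ℝ) ≤ ((d:ℝ) - 1) * ((Vj G p q j).card : ℝ) := by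
      rw [hd1]
      exact_mod_cast hc
    have hinv : (0:ℝ) ≤ (((d:ℝ)-1)⁻¹)^(j+1) := by positivity
    calc ((Vj G p q (j+1)).card : ℝ) * (((d:ℝ)-1)⁻¹)^(j+1)
        ≤ (((d:ℝ) - 1) * ((Vj G p q j).card : ℝ)) * (((d:ℝ)-1)⁻¹)^(j+1) := by
          exact mul_le_mul_of_nonneg_right hcr hinv
      _ = ((Vj G p q j).card : ℝ) * (((d:ℝ)-1)⁻¹)^j
            * (((d:ℝ)-1) * ((d:ℝ)-1)⁻¹) := by rw [pow_succ]; ring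
      _ = ((Vj G p q j).card : ℝ) * (((d:ℝ)-1)⁻¹)^j := by
            rw [mul_inv_cancel₀ (by linarith), mul_one]
  have anti2 : Antitone (fun j : ℕ => ((Vj G p q j).card : ℝ) * (((d:ℝ)-1)⁻¹)^j) :=
    antitone_nat_of_succ_le anti
  calc ((k:ℝ)+1) * (((Vj G p q k).card : ℝ) * (((d:ℝ)-1)⁻¹)^k)
      = ∑ _j ∈ Finset.range (k+1), (((Vj G p q k).card : ℝ) * (((d:ℝ)-1)⁻¹)^k) := by
        rw [Finset.sum_const, Finset.card_range, nsmul_eq_mul]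
        push_cast
        ring
    _ ≤ ∑ j ∈ Finset.range (k+1), ((Vj G p q j).card : ℝ) * (((d:ℝ)-1)⁻¹)^j := by
        apply Finset.sum_le_sum
        intro j hj
        exact anti2 (by rw [Finset.mem_range] at hj; omega)

lemma rho_boundary {u v : Fin n} (hu : rho G p q u ≤ (k:ℕ∞))
    (hv : ¬ rho G p q v ≤ (k:ℕ∞)) (hadj : G.Adj u v) : rho G p q u = (k:ℕ∞) := by
  by_contra hne
  have h2 := rho_adj G p q hadj.symm
  apply hv
  have hcoe := rho_coe_toNat G k p q hu
  have hlt : (rho G p q u).toNat < k := by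
    have hle : (rho G p q u).toNat ≤ k := Nat.cast_le.mp (by rw [hcoe]; exact hu)
    rcases Nat.lt_or_ge (rho G p q u).toNat k with h | h
    · exact h
    · exfalso
      apply hne
      rw [← hcoe]
      exact_mod_cast le_antisymm hle h
  calc rho G p q v ≤ rho G p q u + 1 := h2
    _ ≤ (k : ℕ∞) := by
        rw [← hcoe]
        exact_mod_cast (by omega : (rho G p q u).toNat + 1 ≤ k)

lemma pair_bound (hd : 3 ≤ d) {u v : Fin n} (hadj : G.Adj u v) :
    ((d:ℝ) + 2*Real.sqrt ((d:ℝ)-1)) * (xv G d k p q u - xv G d k p q v)^2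
      - ((d:ℝ) - 2*Real.sqrt ((d:ℝ)-1)) * (yv G d k p q u - yv G d k p q v)^2 ≤
    (if rho G p q u = (k:ℕ∞) ∧ ¬ rho G p q v ≤ (k:ℕ∞)
      then 4*Real.sqrt ((d:ℝ)-1) * (((d:ℝ)-1)⁻¹)^k else 0)
    + (if rho G p q v = (k:ℕ∞) ∧ ¬ rho G p q u ≤ (k:ℕ∞)
      then 4*Real.sqrt ((d:ℝ)-1) * (((d:ℝ)-1)⁻¹)^k else 0) := by
  obtain ⟨hpos, hsq, hone⟩ := alg_facts hd
  have hcross := alg_cross hd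
  set r : ℝ := (Real.sqrt ((d:ℝ)-1))⁻¹ with hr
  have hr2 : r^2 = ((d:ℝ)-1)⁻¹ := by rw [hr, inv_pow, hsq]
  by_cases hu : rho G p q u ≤ (k:ℕ∞) <;> by_cases hv : rho G p q v ≤ (k:ℕ∞)
  · -- both inside
    rw [if_neg (by tauto), if_neg (by tauto), add_zero]
    have hcu := rho_coe_toNat G k p q hu
    have hcv := rho_coe_toNat G k p q hv
    set iu := (rho G p q u).toNat with hiu
    set iv := (rho G p q v).toNat with hiv
    have h1 : iu ≤ iv + 1 := by
      have := rho_adj G p q hadj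
      rw [← hcu, ← hcv] at this
      exact_mod_cast this
    have h2 : iv ≤ iu + 1 := by
      have := rho_adj G p q hadj.symm
      rw [← hcu, ← hcv] at this
      exact_mod_cast this
    rw [xv, xv, yv, yv, if_pos hu, if_pos hv, if_pos hu, if_pos hv, ← hiu, ← hiv]
    rcases (by omega : iu = iv ∨ iv = iu + 1 ∨ iu = iv + 1) with h | h | h
    · rw [h, sub_self, sub_self]
      simp
    · rw [h]
      have e1 : (r^iu - r^(iu+1))^2 = (r^iu)^2 * (1-r)^2 := by rw [pow_succ]; ring
      have e2 : ((-r)^iu - (-r)^(iu+1))^2 = ((-r)^iu)^2 * (1+r)^2 := by rw [pow_succ]; ring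
      rw [e1, e2, negsq]
      have key : ((d:ℝ) + 2*Real.sqrt ((d:ℝ)-1)) * (1-r)^2
          - ((d:ℝ) - 2*Real.sqrt ((d:ℝ)-1)) * (1+r)^2 = 0 := by
        linarith [hcross]
      have : ((d:ℝ) + 2*Real.sqrt ((d:ℝ)-1)) * ((r^iu)^2 * (1-r)^2)
          - ((d:ℝ) - 2*Real.sqrt ((d:ℝ)-1)) * ((r^iu)^2 * (1+r)^2)
          = (r^iu)^2 * (((d:ℝ) + 2*Real.sqrt ((d:ℝ)-1)) * (1-r)^2
            - ((d:ℝ) - 2*Real.sqrt ((d:ℝ)-1)) * (1+r)^2) := by ring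
      rw [this, key, mul_zero]
    · rw [h]
      have e1 : (r^(iv+1) - r^iv)^2 = (r^iv)^2 * (1-r)^2 := by rw [pow_succ]; ring
      have e2 : ((-r)^(iv+1) - (-r)^iv)^2 = ((-r)^iv)^2 * (1+r)^2 := by rw [pow_succ]; ring
      rw [e1, e2, negsq]
      have key : ((d:ℝ) + 2*Real.sqrt ((d:ℝ)-1)) * (1-r)^2
          - ((d:ℝ) - 2*Real.sqrt ((d:ℝ)-1)) * (1+r)^2 = 0 := by
        linarith [hcross]
      have : ((d:ℝ) + 2*Real.sqrt ((d:ℝ)-1)) * ((r^iv)^2 * (1-r)^2)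
          - ((d:ℝ) - 2*Real.sqrt ((d:ℝ)-1)) * ((r^iv)^2 * (1+r)^2)
          = (r^iv)^2 * (((d:ℝ) + 2*Real.sqrt ((d:ℝ)-1)) * (1-r)^2
            - ((d:ℝ) - 2*Real.sqrt ((d:ℝ)-1)) * (1+r)^2) := by ring
      rw [this, key, mul_zero]
  · -- u inside, v outside : boundary
    have hk' : rho G p q u = (k:ℕ∞) := rho_boundary G k p q hu hv hadj
    rw [if_pos ⟨hk', hv⟩, if_neg (by tauto)]
    rw [xv, xv, yv, yv, if_pos hu, if_neg hv, if_pos hu, if_neg hv]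
    have htn : (rho G p q u).toNat = k := by rw [hk']; simp
    rw [htn, add_zero, sub_zero, sub_zero]
    have heq : ((d:ℝ) + 2*Real.sqrt ((d:ℝ)-1)) * (r^k)^2
        - ((d:ℝ) - 2*Real.sqrt ((d:ℝ)-1)) * ((-r)^k)^2
        = 4*Real.sqrt ((d:ℝ)-1) * (((d:ℝ)-1)⁻¹)^k := by
      rw [negsq, ← hr2, ← pow_mul, mul_comm k 2, pow_mul]
      ring
    linarith [heq]
  · -- v inside, u outside
    have hk' : rho G p q v = (k:ℕ∞) := rho_boundary G k p q hv hu hadj.symm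
    rw [if_neg (by tauto), if_pos ⟨hk', hu⟩, zero_add]
    rw [xv, xv, yv, yv, if_neg hu, if_pos hv, if_neg hu, if_pos hv]
    have htn : (rho G p q v).toNat = k := by rw [hk']; simp
    rw [htn, zero_sub, zero_sub, neg_sq, neg_sq]
    have heq : ((d:ℝ) + 2*Real.sqrt ((d:ℝ)-1)) * (r^k)^2
        - ((d:ℝ) - 2*Real.sqrt ((d:ℝ)-1)) * ((-r)^k)^2
        = 4*Real.sqrt ((d:ℝ)-1) * (((d:ℝ)-1)⁻¹)^k := by
      rw [negsq, ← hr2, ← pow_mul, mul_comm k 2, pow_mul]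
      ring
    linarith [heq]
  · -- both outside
    rw [if_neg (fun hc => hu (le_of_eq hc.1)), if_neg (fun hc => hv (le_of_eq hc.1)), add_zero]
    rw [xv, xv, yv, yv, if_neg hu, if_neg hv, if_neg hu, if_neg hv]
    simp

noncomputable def Qf (G : SimpleGraph (Fin n)) (z : Fin n → ℝ) : ℝ :=
  ∑ u, ∑ v, if G.Adj u v then (z u - z v)^2 else 0

lemma edge_bound (hd : 3 ≤ d) (hreg : G.IsRegularOfDegree d) (hpq : G.Adj p q) :
    ((d:ℝ) + 2*Real.sqrt ((d:ℝ)-1)) * Qf G (xv G d k p q)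
      ≤ ((d:ℝ) - 2*Real.sqrt ((d:ℝ)-1)) * Qf G (yv G d k p q)
        + 8 * (((d:ℝ)-1) * Real.sqrt ((d:ℝ)-1)) / ((k:ℝ)+1) * ∑ v, (xv G d k p q v)^2 := by
  obtain ⟨hpos, hsq, -⟩ := alg_facts hd
  have he2 : (2:ℝ) ≤ (d:ℝ)-1 := by
    have : (3:ℝ) ≤ (d:ℝ) := by exact_mod_cast hd
    linarith
  have hd1 : ((d - 1 : ℕ) : ℝ) = (d:ℝ) - 1 := by
    have : (1:ℕ) ≤ d := by omega
    push_cast [Nat.cast_sub this]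
    ring
  set C : ℝ := 4*Real.sqrt ((d:ℝ)-1) * (((d:ℝ)-1)⁻¹)^k with hC
  have hCpos : 0 ≤ C := by rw [hC]; positivity
  have h1 : ((d:ℝ) + 2*Real.sqrt ((d:ℝ)-1)) * Qf G (xv G d k p q)
      - ((d:ℝ) - 2*Real.sqrt ((d:ℝ)-1)) * Qf G (yv G d k p q)
      = ∑ u, ∑ v, (if G.Adj u v then
          ((d:ℝ) + 2*Real.sqrt ((d:ℝ)-1)) * (xv G d k p q u - xv G d k p q v)^2
          - ((d:ℝ) - 2*Real.sqrt ((d:ℝ)-1)) * (yv G d k p q u - yv G d k p q v)^2 else 0) := by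
    rw [Qf, Qf, Finset.mul_sum, Finset.mul_sum, ← Finset.sum_sub_distrib]
    apply Finset.sum_congr rfl; intro u _
    rw [Finset.mul_sum, Finset.mul_sum, ← Finset.sum_sub_distrib]
    apply Finset.sum_congr rfl; intro v _
    by_cases h : G.Adj u v
    · rw [if_pos h, if_pos h, if_pos h]
    · rw [if_neg h, if_neg h, if_neg h]; ring
  have h2 : ∀ u : Fin n, ∀ v : Fin n, (if G.Adj u v then
          ((d:ℝ) + 2*Real.sqrt ((d:ℝ)-1)) * (xv G d k p q u - xv G d k p q v)^2
          - ((d:ℝ) - 2*Real.sqrt ((d:ℝ)-1)) * (yv G d k p q u - yv G d k p q v)^2 else 0)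
      ≤ (if rho G p q u = (k:ℕ∞) then
            (if G.Adj u v ∧ ¬ rho G p q v ≤ (k:ℕ∞) then C else 0) else 0)
        + (if rho G p q v = (k:ℕ∞) then
            (if G.Adj v u ∧ ¬ rho G p q u ≤ (k:ℕ∞) then C else 0) else 0) := by
    intro u v
    by_cases h : G.Adj u v
    · rw [if_pos h]
      refine le_trans (pair_bound G d k p q hd h) ?_
      apply add_le_add
      · by_cases e1 : rho G p q u = (k:ℕ∞) <;> by_cases e2 : rho G p q v ≤ (k:ℕ∞) <;>
          simp [e1, e2, h, hCpos, hC, inv_pow]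
      · by_cases e1 : rho G p q v = (k:ℕ∞) <;> by_cases e2 : rho G p q u ≤ (k:ℕ∞) <;>
          simp [e1, e2, h.symm, hCpos, hC, inv_pow]
    · rw [if_neg h]
      apply add_nonneg <;> { split_ifs <;> simp [hCpos] }
  have hsum1 : ∀ (u : Fin n),
      ∑ v, (if rho G p q u = (k:ℕ∞) then
          (if G.Adj u v ∧ ¬ rho G p q v ≤ (k:ℕ∞) then C else 0) else 0)
      ≤ (if rho G p q u = (k:ℕ∞) then C * ((d-1:ℕ):ℝ) else 0) := by
    intro u
    by_cases h : rho G p q u = (k:ℕ∞)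
    · simp only [if_pos h]
      rw [Finset.sum_ite, Finset.sum_const, Finset.sum_const_zero, add_zero, nsmul_eq_mul]
      have hcard : (Finset.univ.filter
          (fun v => G.Adj u v ∧ ¬ rho G p q v ≤ (k:ℕ∞))).card ≤ d - 1 := by
        have heq : Finset.univ.filter (fun v => G.Adj u v ∧ ¬ rho G p q v ≤ (k:ℕ∞))
            = (G.neighborFinset u).filter (fun v => ¬ rho G p q v ≤ (k:ℕ∞)) := by
          ext w
          simp [SimpleGraph.mem_neighborFinset]
        rw [heq]
        apply witness_card G p q hreg hpq (by rw [h]; exact ENat.coe_ne_top k)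
        intro w hw hcon
        rw [h] at hw
        exact hcon hw
      calc ((Finset.univ.filter
          (fun v => G.Adj u v ∧ ¬ rho G p q v ≤ (k:ℕ∞))).card : ℝ) * C
          ≤ ((d-1:ℕ):ℝ) * C :=
            mul_le_mul_of_nonneg_right (Nat.cast_le.mpr hcard) hCpos
        _ = C * ((d-1:ℕ):ℝ) := mul_comm _ _
    · simp only [if_neg h]
      simp
  have h3 : ∑ u, ∑ v, (if rho G p q u = (k:ℕ∞) then
        (if G.Adj u v ∧ ¬ rho G p q v ≤ (k:ℕ∞) then C else 0) else 0)
      ≤ C * ((d-1:ℕ):ℝ) * ((Vj G p q k).card : ℝ) := by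
    calc ∑ u, ∑ v, (if rho G p q u = (k:ℕ∞) then
          (if G.Adj u v ∧ ¬ rho G p q v ≤ (k:ℕ∞) then C else 0) else 0)
        ≤ ∑ u, (if rho G p q u = (k:ℕ∞) then C * ((d-1:ℕ):ℝ) else 0) :=
          Finset.sum_le_sum (fun u _ => hsum1 u)
      _ = ((Finset.univ.filter (fun u => rho G p q u = (k:ℕ∞))).card : ℝ)
            * (C * ((d-1:ℕ):ℝ)) := by
          rw [Finset.sum_ite, Finset.sum_const, Finset.sum_const_zero, add_zero, nsmul_eq_mul]
      _ = C * ((d-1:ℕ):ℝ) * ((Vj G p q k).card : ℝ) := by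
          rw [Vj]
          ring
  have h4 : ∑ u, ∑ v, (if rho G p q v = (k:ℕ∞) then
        (if G.Adj v u ∧ ¬ rho G p q u ≤ (k:ℕ∞) then C else 0) else 0)
      = ∑ u, ∑ v, (if rho G p q u = (k:ℕ∞) then
        (if G.Adj u v ∧ ¬ rho G p q v ≤ (k:ℕ∞) then C else 0) else 0) :=
    Finset.sum_comm
  have h5 : ((d:ℝ) + 2*Real.sqrt ((d:ℝ)-1)) * Qf G (xv G d k p q)
      - ((d:ℝ) - 2*Real.sqrt ((d:ℝ)-1)) * Qf G (yv G d k p q)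
      ≤ 2 * (C * ((d-1:ℕ):ℝ) * ((Vj G p q k).card : ℝ)) := by
    rw [h1]
    calc ∑ u, ∑ v, (if G.Adj u v then
          ((d:ℝ) + 2*Real.sqrt ((d:ℝ)-1)) * (xv G d k p q u - xv G d k p q v)^2
          - ((d:ℝ) - 2*Real.sqrt ((d:ℝ)-1)) * (yv G d k p q u - yv G d k p q v)^2 else 0)
        ≤ ∑ u, ∑ v, ((if rho G p q u = (k:ℕ∞) then
            (if G.Adj u v ∧ ¬ rho G p q v ≤ (k:ℕ∞) then C else 0) else 0)
          + (if rho G p q v = (k:ℕ∞) then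
            (if G.Adj v u ∧ ¬ rho G p q u ≤ (k:ℕ∞) then C else 0) else 0)) := by
          apply Finset.sum_le_sum
          intro u _
          apply Finset.sum_le_sum
          intro v _
          exact h2 u v
      _ = (∑ u, ∑ v, (if rho G p q u = (k:ℕ∞) then
            (if G.Adj u v ∧ ¬ rho G p q v ≤ (k:ℕ∞) then C else 0) else 0))
          + (∑ u, ∑ v, (if rho G p q v = (k:ℕ∞) then
            (if G.Adj v u ∧ ¬ rho G p q u ≤ (k:ℕ∞) then C else 0) else 0)) := by
          rw [← Finset.sum_add_distrib]
          apply Finset.sum_congr rfl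
          intro u _
          rw [← Finset.sum_add_distrib]
      _ ≤ 2 * (C * ((d-1:ℕ):ℝ) * ((Vj G p q k).card : ℝ)) := by
          rw [h4]
          linarith [h3]
  have hkpos : (0:ℝ) < (k:ℝ) + 1 := by positivity
  have hnk := nk_le G d k p q hd hreg hpq
  have h6 : 2 * (C * ((d-1:ℕ):ℝ) * ((Vj G p q k).card : ℝ))
      ≤ 8 * (((d:ℝ)-1) * Real.sqrt ((d:ℝ)-1)) / ((k:ℝ)+1) * ∑ v, (xv G d k p q v)^2 := by
    rw [div_mul_eq_mul_div, le_div_iff₀ hkpos]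
    have hexp : 2 * (C * ((d-1:ℕ):ℝ) * ((Vj G p q k).card : ℝ)) * ((k:ℝ)+1)
        = 8 * (((d:ℝ)-1) * Real.sqrt ((d:ℝ)-1)) *
            (((k:ℝ)+1) * (((Vj G p q k).card : ℝ) * (((d:ℝ)-1)⁻¹)^k)) := by
      rw [hC, hd1]
      ring
    rw [hexp]
    apply mul_le_mul_of_nonneg_left hnk
    positivity
  linarith [h5, h6]

end Vec

lemma sq_sum_eq {m : ℕ} (f : Fin m → ℝ) (h : ∀ i j, i ≠ j → f i * f j = 0) :
    (∑ i, f i)^2 = ∑ i, (f i)^2 := by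
  rw [sq, Finset.sum_mul_sum]
  apply Finset.sum_congr rfl
  intro i _
  rw [Finset.sum_eq_single i]
  · rw [sq]
  · intro j _ hj
    exact h i j (fun e => hj e.symm)
  · intro hi
    exact absurd (Finset.mem_univ i) hi

/-- Let `s, k ≥ 1`, `d ≥ 3`, and let `G` be an `n`-vertex `d`-regular
graph containing `4s-2` edges `(a i)(b i)` that are pairwise at distance at least `2k+2`
(all endpoint distances, in `ℕ∞`, are at least `2k+2`). Then
`(d+2√(d-1))·λ_{s+1}(G) ≤ (d-2√(d-1))·λ_{n-s+1}(G) + 4(d-1)^{3/2}/(k+1)`. -/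
theorem stmt11 {n : ℕ} (s k d : ℕ) (hs : 1 ≤ s) (hk : 1 ≤ k) (hd : 3 ≤ d)
    (G : SimpleGraph (Fin n)) (hreg : G.IsRegularOfDegree d)
    (a b : Fin (4 * s - 2) → Fin n) (hadj : ∀ i, G.Adj (a i) (b i))
    (hdist : ∀ i j, i ≠ j →
      ((2 * k + 2 : ℕ) : ℕ∞) ≤ G.edist (a i) (a j) ∧
      ((2 * k + 2 : ℕ) : ℕ∞) ≤ G.edist (a i) (b j) ∧
      ((2 * k + 2 : ℕ) : ℕ∞) ≤ G.edist (b i) (a j) ∧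
      ((2 * k + 2 : ℕ) : ℕ∞) ≤ G.edist (b i) (b j)) :
    ((d : ℝ) + 2 * Real.sqrt ((d : ℝ) - 1)) * lapEig G (s + 1) ≤
      ((d : ℝ) - 2 * Real.sqrt ((d : ℝ) - 1)) * lapEig G (n - s + 1) +
        4 * ((d : ℝ) - 1) ^ ((3 : ℝ) / 2) / ((k : ℝ) + 1) := by
  have hL : (G.lapMatrix ℝ).IsHermitian := (SimpleGraph.posSemidef_lapMatrix ℝ G).1
  obtain ⟨hpos, hsq, hone⟩ := alg_facts hd
  have he2 : (2:ℝ) ≤ (d:ℝ)-1 := by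
    have : (3:ℝ) ≤ (d:ℝ) := by exact_mod_cast hd
    linarith
  -- a is injective, so n is big enough
  have hainj : Function.Injective a := by
    intro i j hij
    by_contra hne
    obtain ⟨h1, -, -, -⟩ := hdist i j hne
    rw [hij, SimpleGraph.edist_self] at h1
    have h0 : (2*k+2 : ℕ) = 0 := by exact_mod_cast le_antisymm h1 zero_le
    omega
  have hn : 4*s - 2 ≤ n := by simpa using Fintype.card_le_of_injective a hainj
  have hs_lt : s < n := by omega
  have hns : n - s < n := by omega
  set X : Fin (4*s-2) → Fin n → ℝ := fun i => xv G d k (a i) (b i) with hX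
  set Y : Fin (4*s-2) → Fin n → ℝ := fun i => yv G d k (a i) (b i) with hY
  have hsuppX : ∀ i v, X i v ≠ 0 → rho G (a i) (b i) v ≤ (k:ℕ∞) := by
    intro i v h
    by_contra hc
    exact h (by simp [hX, xv, hc])
  have hsuppY : ∀ i v, Y i v ≠ 0 → rho G (a i) (b i) v ≤ (k:ℕ∞) := by
    intro i v h
    by_contra hc
    exact h (by simp [hY, yv, hc])
  have hfar : ∀ i j : Fin (4*s-2), i ≠ j → ∀ u w : Fin n,
      rho G (a i) (b i) u ≤ (k:ℕ∞) → rho G (a j) (b j) w ≤ (k:ℕ∞) →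
      u ≠ w ∧ ¬ G.Adj u w := by
    intro i j hij u w hu hw
    have key : ¬ (G.edist u w ≤ 1) := by
      intro huw
      rw [rho, min_le_iff] at hu hw
      obtain ⟨hD1, hD2, hD3, hD4⟩ := hdist i j hij
      have hfin : ∀ (t1 t2 : Fin n), G.edist u t1 ≤ (k:ℕ∞) → G.edist w t2 ≤ (k:ℕ∞) →
          ((2*k+2 : ℕ) : ℕ∞) ≤ G.edist t1 t2 → False := by
        intro t1 t2 h1 h2 hbig
        have hchain : G.edist t1 t2 ≤ ((2*k+1 : ℕ) : ℕ∞) := by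
          calc G.edist t1 t2 ≤ G.edist t1 u + G.edist u t2 := SimpleGraph.edist_triangle
            _ ≤ G.edist t1 u + (G.edist u w + G.edist w t2) :=
                add_le_add_right SimpleGraph.edist_triangle _
            _ ≤ (k:ℕ∞) + (1 + (k:ℕ∞)) := by
                apply add_le_add
                · rw [SimpleGraph.edist_comm]; exact h1
                · exact add_le_add huw h2
            _ = ((2*k+1 : ℕ) : ℕ∞) := by push_cast; ring
        have hle := le_trans hbig hchain
        have : (2*k+2 : ℕ) ≤ 2*k+1 := by exact_mod_cast hle
        omega
      rcases hu with hu | hu <;> rcases hw with hw | hw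
      · exact hfin _ _ hu hw hD1
      · exact hfin _ _ hu hw hD2
      · exact hfin _ _ hu hw hD3
      · exact hfin _ _ hu hw hD4
    constructor
    · rintro rfl
      exact key (by rw [SimpleGraph.edist_self]; exact zero_le)
    · intro hadj'
      exact key (le_of_eq (SimpleGraph.edist_eq_one_iff_adj.mpr hadj'))
  set U : Matrix (Fin n) (Fin n) ℝ := (hL.eigenvectorUnitary : Matrix (Fin n) (Fin n) ℝ) with hU
  set σ : Equiv.Perm (Fin n) := Tuple.sort hL.eigenvalues with hσ
  have hidx1 : ∀ t : Fin s, (t:ℕ) < n := fun t => lt_trans t.isLt hs_lt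
  have hidx2 : ∀ t : Fin (s-1), n - s + 1 + (t:ℕ) < n := by
    intro t
    have := t.isLt
    omega
  set φ : (Fin (4*s-2) → ℝ) →ₗ[ℝ] ((Fin s → ℝ) × (Fin (s-1) → ℝ)) :=
    { toFun := fun c =>
        (fun t => ∑ i, c i * ((star U *ᵥ X i) (σ ⟨(t:ℕ), hidx1 t⟩)),
         fun t => ∑ i, c i * ((star U *ᵥ Y i) (σ ⟨n - s + 1 + (t:ℕ), hidx2 t⟩))),
      map_add' := by
        intro c₁ c₂
        refine Prod.ext ?_ ?_ <;> funext t <;>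
          simp [add_mul, Finset.sum_add_distrib]
      map_smul' := by
        intro r c
        refine Prod.ext ?_ ?_ <;> funext t <;>
          simp [Finset.mul_sum, mul_assoc] } with hφ
  obtain ⟨c, hcker, hcne⟩ : ∃ c, c ∈ LinearMap.ker φ ∧ c ≠ 0 := by
    have hni : ¬ Function.Injective φ := by
      intro hinj
      have hle := LinearMap.finrank_le_finrank_of_injective hinj
      rw [Module.finrank_pi, Module.finrank_prod, Module.finrank_pi, Module.finrank_pi] at hle
      simp only [Fintype.card_fin] at hle
      omega
    have hker : LinearMap.ker φ ≠ ⊥ := fun hbot => hni (LinearMap.ker_eq_bot.mp hbot)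
    obtain ⟨c, hc1, hc2⟩ := (Submodule.ne_bot_iff _).mp hker
    exact ⟨c, hc1, hc2⟩
  have hφc : φ c = 0 := LinearMap.mem_ker.mp hcker
  set z : Fin n → ℝ := fun u => ∑ i, c i * X i u with hz
  set z' : Fin n → ℝ := fun u => ∑ i, c i * Y i u with hz'
  have hzero1 : ∀ (u : Fin n) (i j : Fin (4*s-2)), i ≠ j →
      (c i * X i u) * (c j * X j u) = 0 := by
    intro u i j hij
    rcases eq_or_ne (X i u) 0 with h | h
    · rw [h]; ring
    rcases eq_or_ne (X j u) 0 with h' | h'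
    · rw [h']; ring
    exact absurd rfl ((hfar i j hij u u (hsuppX i u h) (hsuppX j u h')).1)
  have hzero1Y : ∀ (u : Fin n) (i j : Fin (4*s-2)), i ≠ j →
      (c i * Y i u) * (c j * Y j u) = 0 := by
    intro u i j hij
    rcases eq_or_ne (Y i u) 0 with h | h
    · rw [h]; ring
    rcases eq_or_ne (Y j u) 0 with h' | h'
    · rw [h']; ring
    exact absurd rfl ((hfar i j hij u u (hsuppY i u h) (hsuppY j u h')).1)
  have hzero2 : ∀ (u v : Fin n), G.Adj u v → ∀ (i j : Fin (4*s-2)), i ≠ j →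
      (c i * (X i u - X i v)) * (c j * (X j u - X j v)) = 0 := by
    intro u v huv i j hij
    have hXi0 : (X i u - X i v = 0) ∨ (X j u - X j v = 0) := by
      by_contra hcon
      push_neg at hcon
      obtain ⟨h1, h2⟩ := hcon
      have e1 : X i u ≠ 0 ∨ X i v ≠ 0 := by
        by_contra hc; push_neg at hc; rw [hc.1, hc.2, sub_zero] at h1; exact h1 rfl
      have e2 : X j u ≠ 0 ∨ X j v ≠ 0 := by
        by_contra hc; push_neg at hc; rw [hc.1, hc.2, sub_zero] at h2; exact h2 rfl
      rcases e1 with e1 | e1 <;> rcases e2 with e2 | e2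
      · exact (hfar i j hij u u (hsuppX _ _ e1) (hsuppX _ _ e2)).1 rfl
      · exact (hfar i j hij u v (hsuppX _ _ e1) (hsuppX _ _ e2)).2 huv
      · exact (hfar i j hij v u (hsuppX _ _ e1) (hsuppX _ _ e2)).2 huv.symm
      · exact (hfar i j hij v v (hsuppX _ _ e1) (hsuppX _ _ e2)).1 rfl
    rcases hXi0 with h | h
    · rw [h]; ring
    · rw [h]; ring
  have hzero2Y : ∀ (u v : Fin n), G.Adj u v → ∀ (i j : Fin (4*s-2)), i ≠ j →
      (c i * (Y i u - Y i v)) * (c j * (Y j u - Y j v)) = 0 := by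
    intro u v huv i j hij
    have hXi0 : (Y i u - Y i v = 0) ∨ (Y j u - Y j v = 0) := by
      by_contra hcon
      push_neg at hcon
      obtain ⟨h1, h2⟩ := hcon
      have e1 : Y i u ≠ 0 ∨ Y i v ≠ 0 := by
        by_contra hc; push_neg at hc; rw [hc.1, hc.2, sub_zero] at h1; exact h1 rfl
      have e2 : Y j u ≠ 0 ∨ Y j v ≠ 0 := by
        by_contra hc; push_neg at hc; rw [hc.1, hc.2, sub_zero] at h2; exact h2 rfl
      rcases e1 with e1 | e1 <;> rcases e2 with e2 | e2
      · exact (hfar i j hij u u (hsuppY _ _ e1) (hsuppY _ _ e2)).1 rfl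
      · exact (hfar i j hij u v (hsuppY _ _ e1) (hsuppY _ _ e2)).2 huv
      · exact (hfar i j hij v u (hsuppY _ _ e1) (hsuppY _ _ e2)).2 huv.symm
      · exact (hfar i j hij v v (hsuppY _ _ e1) (hsuppY _ _ e2)).1 rfl
    rcases hXi0 with h | h
    · rw [h]; ring
    · rw [h]; ring
  have hnormz : z ⬝ᵥ z = ∑ i, (c i)^2 * (∑ u, (X i u)^2) := by
    rw [dotProduct]
    calc ∑ u, z u * z u = ∑ u, ∑ i, (c i * X i u)^2 := by
          apply Finset.sum_congr rfl; intro u _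
          rw [← sq]
          exact sq_sum_eq _ (hzero1 u)
      _ = ∑ i, ∑ u, (c i * X i u)^2 := Finset.sum_comm
      _ = ∑ i, (c i)^2 * (∑ u, (X i u)^2) := by
          apply Finset.sum_congr rfl; intro i _
          rw [Finset.mul_sum]
          apply Finset.sum_congr rfl; intro u _
          ring
  have hnormz' : z' ⬝ᵥ z' = ∑ i, (c i)^2 * (∑ u, (Y i u)^2) := by
    rw [dotProduct]
    calc ∑ u, z' u * z' u = ∑ u, ∑ i, (c i * Y i u)^2 := by
          apply Finset.sum_congr rfl; intro u _
          rw [← sq]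
          exact sq_sum_eq _ (hzero1Y u)
      _ = ∑ i, ∑ u, (c i * Y i u)^2 := Finset.sum_comm
      _ = ∑ i, (c i)^2 * (∑ u, (Y i u)^2) := by
          apply Finset.sum_congr rfl; intro i _
          rw [Finset.mul_sum]
          apply Finset.sum_congr rfl; intro u _
          ring
  have hzz' : z' ⬝ᵥ z' = z ⬝ᵥ z := by
    rw [hnormz, hnormz']
    apply Finset.sum_congr rfl; intro i _
    congr 1
    apply Finset.sum_congr rfl; intro u _
    simp only [hX, hY]
    exact ysq G d k (a i) (b i) u
  have hQfz : Qf G z = ∑ i, (c i)^2 * Qf G (X i) := by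
    rw [Qf]
    calc ∑ u, ∑ v, (if G.Adj u v then (z u - z v)^2 else 0)
        = ∑ u, ∑ v, ∑ i, (if G.Adj u v then (c i * (X i u - X i v))^2 else 0) := by
          apply Finset.sum_congr rfl; intro u _
          apply Finset.sum_congr rfl; intro v _
          by_cases h : G.Adj u v
          · simp only [if_pos h]
            have hdz : z u - z v = ∑ i, c i * (X i u - X i v) := by
              simp only [hz]
              rw [← Finset.sum_sub_distrib]
              apply Finset.sum_congr rfl; intro i _; ring
            rw [hdz]
            exact sq_sum_eq _ (hzero2 u v h)
          · simp [if_neg h]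
      _ = ∑ u, ∑ i, ∑ v, (if G.Adj u v then (c i * (X i u - X i v))^2 else 0) := by
          apply Finset.sum_congr rfl; intro u _
          exact Finset.sum_comm
      _ = ∑ i, ∑ u, ∑ v, (if G.Adj u v then (c i * (X i u - X i v))^2 else 0) :=
          Finset.sum_comm
      _ = ∑ i, (c i)^2 * Qf G (X i) := by
          apply Finset.sum_congr rfl; intro i _
          rw [Qf, Finset.mul_sum]
          apply Finset.sum_congr rfl; intro u _
          rw [Finset.mul_sum]
          apply Finset.sum_congr rfl; intro v _
          by_cases h : G.Adj u v
          · rw [if_pos h, if_pos h, mul_pow]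
          · simp [if_neg h]
  have hQfz' : Qf G z' = ∑ i, (c i)^2 * Qf G (Y i) := by
    rw [Qf]
    calc ∑ u, ∑ v, (if G.Adj u v then (z' u - z' v)^2 else 0)
        = ∑ u, ∑ v, ∑ i, (if G.Adj u v then (c i * (Y i u - Y i v))^2 else 0) := by
          apply Finset.sum_congr rfl; intro u _
          apply Finset.sum_congr rfl; intro v _
          by_cases h : G.Adj u v
          · simp only [if_pos h]
            have hdz : z' u - z' v = ∑ i, c i * (Y i u - Y i v) := by
              simp only [hz']
              rw [← Finset.sum_sub_distrib]
              apply Finset.sum_congr rfl; intro i _; ring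
            rw [hdz]
            exact sq_sum_eq _ (hzero2Y u v h)
          · simp [if_neg h]
      _ = ∑ u, ∑ i, ∑ v, (if G.Adj u v then (c i * (Y i u - Y i v))^2 else 0) := by
          apply Finset.sum_congr rfl; intro u _
          exact Finset.sum_comm
      _ = ∑ i, ∑ u, ∑ v, (if G.Adj u v then (c i * (Y i u - Y i v))^2 else 0) :=
          Finset.sum_comm
      _ = ∑ i, (c i)^2 * Qf G (Y i) := by
          apply Finset.sum_congr rfl; intro i _
          rw [Qf, Finset.mul_sum]
          apply Finset.sum_congr rfl; intro u _
          rw [Finset.mul_sum]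
          apply Finset.sum_congr rfl; intro v _
          by_cases h : G.Adj u v
          · rw [if_pos h, if_pos h, mul_pow]
          · simp [if_neg h]
  have hα : (0:ℝ) ≤ (d:ℝ) + 2*Real.sqrt ((d:ℝ)-1) := by
    have hd0 : (0:ℝ) ≤ (d:ℝ) := by positivity
    linarith [Real.sqrt_nonneg ((d:ℝ)-1)]
  have hβ : (0:ℝ) ≤ (d:ℝ) - 2*Real.sqrt ((d:ℝ)-1) := by
    nlinarith [sq_nonneg (Real.sqrt ((d:ℝ)-1) - 1), hsq]
  have hmid : ((d:ℝ)+2*Real.sqrt ((d:ℝ)-1)) * Qf G z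
      ≤ ((d:ℝ)-2*Real.sqrt ((d:ℝ)-1)) * Qf G z'
        + 8 * (((d:ℝ)-1) * Real.sqrt ((d:ℝ)-1)) / ((k:ℝ)+1) * (z ⬝ᵥ z) := by
    rw [hQfz, hQfz', hnormz, Finset.mul_sum, Finset.mul_sum, Finset.mul_sum,
      ← Finset.sum_add_distrib]
    apply Finset.sum_le_sum
    intro i _
    have hE := edge_bound G d k (a i) (b i) hd hreg (hadj i)
    have hscaled := mul_le_mul_of_nonneg_left hE (sq_nonneg (c i))
    simp only [hX, hY]
    calc ((d:ℝ)+2*Real.sqrt ((d:ℝ)-1)) * ((c i)^2 * Qf G (xv G d k (a i) (b i)))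
        = (c i)^2 * (((d:ℝ)+2*Real.sqrt ((d:ℝ)-1)) * Qf G (xv G d k (a i) (b i))) := by ring
      _ ≤ (c i)^2 * (((d:ℝ)-2*Real.sqrt ((d:ℝ)-1)) * Qf G (yv G d k (a i) (b i))
            + 8 * (((d:ℝ)-1) * Real.sqrt ((d:ℝ)-1)) / ((k:ℝ)+1)
              * ∑ v, (xv G d k (a i) (b i) v)^2) := hscaled
      _ = ((d:ℝ)-2*Real.sqrt ((d:ℝ)-1)) * ((c i)^2 * Qf G (yv G d k (a i) (b i)))
            + 8 * (((d:ℝ)-1) * Real.sqrt ((d:ℝ)-1)) / ((k:ℝ)+1)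
              * ((c i)^2 * ∑ v, (xv G d k (a i) (b i) v)^2) := by ring
  have lapq : ∀ w : Fin n → ℝ, w ⬝ᵥ (G.lapMatrix ℝ *ᵥ w) = Qf G w / 2 := by
    intro w
    rw [← Matrix.toLinearMap₂'_apply', SimpleGraph.lapMatrix_toLinearMap₂', Qf]
  have hlinX : ∀ jj : Fin n, (star U *ᵥ z) jj = ∑ i, c i * ((star U *ᵥ X i) jj) := by
    intro jj
    simp only [hz, Matrix.mulVec, dotProduct, Finset.mul_sum]
    rw [Finset.sum_comm]
    apply Finset.sum_congr rfl; intro i _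
    apply Finset.sum_congr rfl; intro u _
    ring
  have hlinY : ∀ jj : Fin n, (star U *ᵥ z') jj = ∑ i, c i * ((star U *ᵥ Y i) jj) := by
    intro jj
    simp only [hz', Matrix.mulVec, dotProduct, Finset.mul_sum]
    rw [Finset.sum_comm]
    apply Finset.sum_congr rfl; intro i _
    apply Finset.sum_congr rfl; intro u _
    ring
  have hconz : ∀ j : Fin n, (j:ℕ) < s → (star U *ᵥ z) (σ j) = 0 := by
    intro j hj
    rw [hlinX (σ j)]
    have h0 := congrFun (congrArg Prod.fst hφc) ⟨(j:ℕ), hj⟩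
    simp only [hφ, LinearMap.coe_mk, AddHom.coe_mk, Prod.fst_zero, Pi.zero_apply] at h0
    have hidxeq : (⟨((⟨(j:ℕ), hj⟩ : Fin s) : ℕ), hidx1 ⟨(j:ℕ), hj⟩⟩ : Fin n) = j :=
      Fin.ext rfl
    rw [hidxeq] at h0
    exact h0
  have hconz' : ∀ j : Fin n, (n - s : ℕ) < (j:ℕ) → (star U *ᵥ z') (σ j) = 0 := by
    intro j hj
    rw [hlinY (σ j)]
    have hjlt := j.isLt
    have ht : (j:ℕ) - (n - s + 1) < s - 1 := by omega
    have h0 := congrFun (congrArg Prod.snd hφc) ⟨(j:ℕ) - (n - s + 1), ht⟩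
    simp only [hφ, LinearMap.coe_mk, AddHom.coe_mk, Prod.snd_zero, Pi.zero_apply] at h0
    have hidxeq : (⟨n - s + 1 + ((⟨(j:ℕ) - (n - s + 1), ht⟩ : Fin (s-1)) : ℕ),
        hidx2 ⟨(j:ℕ) - (n - s + 1), ht⟩⟩ : Fin n) = j := by
      apply Fin.ext
      simp only []
      omega
    rw [hidxeq] at h0
    exact h0
  have hray1 : sortedEigs (G.lapMatrix ℝ) ⟨s, hs_lt⟩ * (z ⬝ᵥ z)
      ≤ z ⬝ᵥ (G.lapMatrix ℝ *ᵥ z) :=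
    rayleigh_low hL ⟨s, hs_lt⟩ z hconz
  have hray2 : z' ⬝ᵥ (G.lapMatrix ℝ *ᵥ z')
      ≤ sortedEigs (G.lapMatrix ℝ) ⟨n-s, hns⟩ * (z' ⬝ᵥ z') :=
    rayleigh_high hL ⟨n-s, hns⟩ z' hconz'
  have hzpos : 0 < z ⬝ᵥ z := by
    rw [hnormz]
    obtain ⟨i₀, hi₀⟩ := Function.ne_iff.mp hcne
    have hi₀' : c i₀ ≠ 0 := by simpa using hi₀
    apply Finset.sum_pos'
    · intro i _; positivity
    · refine ⟨i₀, Finset.mem_univ _, ?_⟩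
      have h1 : (0:ℝ) < (c i₀)^2 :=
        lt_of_le_of_ne (sq_nonneg _) (Ne.symm (pow_ne_zero 2 hi₀'))
      have h2 : (1:ℝ) ≤ ∑ u, (X i₀ u)^2 := by
        have honex : X i₀ (a i₀) = 1 := by
          simp only [hX]
          exact xv_p G d k (a i₀) (b i₀)
        calc (1:ℝ) = (X i₀ (a i₀))^2 := by rw [honex]; norm_num
          _ ≤ ∑ u, (X i₀ u)^2 :=
              Finset.single_le_sum (f := fun u => (X i₀ u)^2)
                (fun u _ => sq_nonneg _) (Finset.mem_univ (a i₀))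
      exact mul_pos h1 (lt_of_lt_of_le one_pos h2)
  -- combine everything
  rw [lapq z] at hray1
  rw [lapq z', hzz'] at hray2
  have hfinal : ((d:ℝ)+2*Real.sqrt ((d:ℝ)-1)) * sortedEigs (G.lapMatrix ℝ) ⟨s, hs_lt⟩
      ≤ ((d:ℝ)-2*Real.sqrt ((d:ℝ)-1)) * sortedEigs (G.lapMatrix ℝ) ⟨n-s, hns⟩
        + 4 * (((d:ℝ)-1) * Real.sqrt ((d:ℝ)-1)) / ((k:ℝ)+1) := by
    have s1 := mul_le_mul_of_nonneg_left hray1 hα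
    have s2 := mul_le_mul_of_nonneg_left hray2 hβ
    have hbig : (((d:ℝ)+2*Real.sqrt ((d:ℝ)-1)) * sortedEigs (G.lapMatrix ℝ) ⟨s, hs_lt⟩)
        * (z ⬝ᵥ z)
        ≤ (((d:ℝ)-2*Real.sqrt ((d:ℝ)-1)) * sortedEigs (G.lapMatrix ℝ) ⟨n-s, hns⟩
          + 4 * (((d:ℝ)-1) * Real.sqrt ((d:ℝ)-1)) / ((k:ℝ)+1)) * (z ⬝ᵥ z) := by
      calc (((d:ℝ)+2*Real.sqrt ((d:ℝ)-1)) * sortedEigs (G.lapMatrix ℝ) ⟨s, hs_lt⟩)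
            * (z ⬝ᵥ z)
          = ((d:ℝ)+2*Real.sqrt ((d:ℝ)-1))
              * (sortedEigs (G.lapMatrix ℝ) ⟨s, hs_lt⟩ * (z ⬝ᵥ z)) := by ring
        _ ≤ ((d:ℝ)+2*Real.sqrt ((d:ℝ)-1)) * (Qf G z / 2) := s1
        _ = (((d:ℝ)+2*Real.sqrt ((d:ℝ)-1)) * Qf G z) / 2 := by ring
        _ ≤ (((d:ℝ)-2*Real.sqrt ((d:ℝ)-1)) * Qf G z'
              + 8 * (((d:ℝ)-1) * Real.sqrt ((d:ℝ)-1)) / ((k:ℝ)+1) * (z ⬝ᵥ z)) / 2 := by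
            linarith [hmid]
        _ = ((d:ℝ)-2*Real.sqrt ((d:ℝ)-1)) * (Qf G z' / 2)
              + 4 * (((d:ℝ)-1) * Real.sqrt ((d:ℝ)-1)) / ((k:ℝ)+1) * (z ⬝ᵥ z) := by
            ring
        _ ≤ ((d:ℝ)-2*Real.sqrt ((d:ℝ)-1))
              * (sortedEigs (G.lapMatrix ℝ) ⟨n-s, hns⟩ * (z ⬝ᵥ z))
              + 4 * (((d:ℝ)-1) * Real.sqrt ((d:ℝ)-1)) / ((k:ℝ)+1) * (z ⬝ᵥ z) := by
            linarith [s2]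
        _ = (((d:ℝ)-2*Real.sqrt ((d:ℝ)-1)) * sortedEigs (G.lapMatrix ℝ) ⟨n-s, hns⟩
              + 4 * (((d:ℝ)-1) * Real.sqrt ((d:ℝ)-1)) / ((k:ℝ)+1)) * (z ⬝ᵥ z) := by
            ring
    exact le_of_mul_le_mul_right hbig hzpos
  have hgoal1 : lapEig G (s+1) = sortedEigs (G.lapMatrix ℝ) ⟨s, hs_lt⟩ := by
    rw [lapEig, dif_pos (show s + 1 - 1 < n by omega)]
    congr 1
  have hgoal2 : lapEig G (n-s+1) = sortedEigs (G.lapMatrix ℝ) ⟨n-s, hns⟩ := by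
    rw [lapEig, dif_pos (show n - s + 1 - 1 < n by omega)]
    congr 1
  have hrpow : ((d:ℝ)-1) ^ ((3:ℝ)/2) = ((d:ℝ)-1) * Real.sqrt ((d:ℝ)-1) := by
    rw [show (3:ℝ)/2 = 1 + 1/2 by norm_num,
      Real.rpow_add (by linarith : (0:ℝ) < (d:ℝ)-1), Real.rpow_one, ← Real.sqrt_eq_rpow]
  rw [hgoal1, hgoal2, hrpow]
  calc ((d:ℝ)+2*Real.sqrt ((d:ℝ)-1)) * sortedEigs (G.lapMatrix ℝ) ⟨s, hs_lt⟩
      ≤ ((d:ℝ)-2*Real.sqrt ((d:ℝ)-1)) * sortedEigs (G.lapMatrix ℝ) ⟨n-s, hns⟩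
        + 4 * (((d:ℝ)-1) * Real.sqrt ((d:ℝ)-1)) / ((k:ℝ)+1) := hfinal
    _ = ((d:ℝ)-2*Real.sqrt ((d:ℝ)-1)) * sortedEigs (G.lapMatrix ℝ) ⟨n-s, hns⟩
        + 4 * (((d:ℝ)-1) * Real.sqrt ((d:ℝ)-1)) / ((k:ℝ)+1) := rfl
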